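/- Let A be a ring with unit and P a right A-module. The following are equivalent: (1) every finitely generated submodule F of P is contained in a finitely generated projective submodule P_F which is a direct summand of P; (2) every finite subset of P admits an idempotent dual basis, i.e., a finite set {(u_i, f_i)} ⊆ P × Hom_A(P, A) with n = Σ u_i f_i(n) for all n in the subset and u_i = Σ_j u_j f_j(u_i) for all i. -/

import Mathlib

open MulOpposite

section aux
variable {A P : Type} [Ring A] [AddCommGroup P] [Module Aᵐᵒᵖ P]

/-- The "trace" endomorphism attached to a finite family `(uᵢ, fᵢ)`. -/
def dualEnd (k : ℕ) (u : Fin k → P) (f : Fin k → (P →ₗ[Aᵐᵒᵖ] A)) : P →ₗ[Aᵐᵒᵖ] P where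
  toFun p := ∑ i, op (f i p) • u i
  map_add' p q := by
    simp [map_add, op_add, add_smul, Finset.sum_add_distrib]
  map_smul' c p := by
    simp only [RingHom.id_apply]
    rw [Finset.smul_sum]
    refine Finset.sum_congr rfl fun i _ => ?_
    rw [map_smul, MulOpposite.smul_eq_mul_unop]
    simp [mul_smul]

lemma dualEnd_apply (k : ℕ) (u : Fin k → P) (f : Fin k → (P →ₗ[Aᵐᵒᵖ] A)) (p : P) :
    dualEnd k u f p = ∑ i, op (f i p) • u i := rfl

end aux

theorem stmt6 (A P : Type) [Ring A] [AddCommGroup P] [Module Aᵐᵒᵖ P] :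
    (∀ F : Submodule Aᵐᵒᵖ P, F.FG → ∃ Q : Submodule Aᵐᵒᵖ P, F ≤ Q ∧ Q.FG ∧
        Module.Projective Aᵐᵒᵖ Q ∧ ∃ Q' : Submodule Aᵐᵒᵖ P, IsCompl Q Q') ↔
    (∀ N : Finset P, ∃ (k : ℕ) (u : Fin k → P) (f : Fin k → (P →ₗ[Aᵐᵒᵖ] A)),
        (∀ n ∈ N, ∑ i, op (f i n) • u i = n) ∧
        (∀ i, ∑ j, op (f j (u i)) • u j = u i)) := by
  constructor
  · -- (1) → (2)
    intro h N
    obtain ⟨Q, hFQ, hfg, hproj, Q', hcompl⟩ :=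
      h (Submodule.span Aᵐᵒᵖ (N : Set P)) (Submodule.fg_span N.finite_toSet)
    haveI : Module.Finite Aᵐᵒᵖ Q := Module.Finite.iff_fg.mpr hfg
    obtain ⟨k, π, hπ⟩ := Module.Finite.exists_fin' Aᵐᵒᵖ Q
    obtain ⟨s, hs⟩ := Module.projective_lifting_property π LinearMap.id hπ
    have hs' : ∀ q : Q, π (s q) = q := fun q => by
      have := congrArg (fun g => g q) hs; simpa using this
    set pr := Q.linearProjOfIsCompl Q' hcompl with hpr
    set v : Fin k → Q := fun i => π (Pi.single i 1) with hv
    set g : Fin k → (P →ₗ[Aᵐᵒᵖ] A) := fun i =>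
      { toFun := fun p => unop (s (pr p) i),
        map_add' := fun p q => by simp [Pi.add_apply],
        map_smul' := fun c p => by
          simp only [map_smul, RingHom.id_apply, Pi.smul_apply, smul_eq_mul,
            MulOpposite.smul_eq_mul_unop, unop_mul] } with hg
    have key : ∀ q : Q, ∑ i, (s q i) • v i = q := by
      intro q
      have h1 : ∑ i, (s q i) • v i = π (∑ i, s q i • Pi.single i 1) := by
        simp [hv, map_sum, map_smul]
      rw [h1]
      have h2 : (∑ i, s q i • Pi.single i (1 : Aᵐᵒᵖ)) = s q := by
        ext j
        simp [Pi.single_apply, Finset.sum_ite_eq', smul_eq_mul]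
      rw [h2, hs' q]
    have main : ∀ n, ∀ hn : n ∈ Q, ∑ i, op (g i n) • (v i : P) = n := by
      intro n hn
      have hprn : pr n = ⟨n, hn⟩ := by
        exact Submodule.linearProjOfIsCompl_apply_left hcompl ⟨n, hn⟩
      calc ∑ i, op (g i n) • (v i : P)
          = ((∑ i, (s ⟨n, hn⟩ i) • v i : Q) : P) := by
            simp only [hg, LinearMap.coe_mk, AddHom.coe_mk, op_unop, hprn]
            push_cast [Submodule.coe_sum]
            rfl
        _ = n := by rw [key]
    exact ⟨k, fun i => (v i : P), g, fun n hn => main n (hFQ (Submodule.subset_span hn)),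
      fun i => main _ (v i).2⟩
  · -- (2) → (1)
    intro h F hF
    obtain ⟨S, hS⟩ := hF
    obtain ⟨k, u, f, hN, hid⟩ := h S
    set e := dualEnd k u f with he
    set Q : Submodule Aᵐᵒᵖ P := Submodule.span Aᵐᵒᵖ (Set.range u) with hQ
    have huQ : ∀ i, u i ∈ Q := fun i => Submodule.subset_span ⟨i, rfl⟩
    have heQ : ∀ p, e p ∈ Q := fun p => by
      rw [dualEnd_apply]; exact Submodule.sum_mem _ fun i _ => Submodule.smul_mem _ _ (huQ i)
    have hefix : ∀ q ∈ Q, e q = q := by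
      intro q hq
      induction hq using Submodule.span_induction with
      | mem x hx => obtain ⟨i, rfl⟩ := hx; exact hid i
      | zero => simp
      | add x y _ _ hx hy => rw [map_add, hx, hy]
      | smul c x _ hx => rw [map_smul, hx]
    refine ⟨Q, ?_, ?_, ?_, ?_⟩
    · rw [← hS]
      rw [Submodule.span_le]
      intro n hn
      rw [← hN n hn]
      exact heQ n
    · exact Submodule.fg_span (Set.finite_range u)
    · -- projective via splitting through Fin k → Aᵐᵒᵖ
      refine Module.Projective.of_split (M := Fin k → Aᵐᵒᵖ)
        ({ toFun := fun q => fun i => op (f i (q : P)),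
           map_add' := fun p q => by ext i; simp,
           map_smul' := fun c p => by
             ext i
             simp only [Submodule.coe_smul, map_smul, RingHom.id_apply, Pi.smul_apply,
               smul_eq_mul, MulOpposite.smul_eq_mul_unop]
             simp })
        ({ toFun := fun c => ∑ i, c i • (⟨u i, huQ i⟩ : Q),
           map_add' := fun c d => by
             simp only [Pi.add_apply, add_smul, Finset.sum_add_distrib],
           map_smul' := fun a c => by
             simp only [Pi.smul_apply, smul_eq_mul, mul_smul, RingHom.id_apply]
             rw [Finset.smul_sum] })
        ?_
      ext q
      simp only [LinearMap.coe_comp, Function.comp_apply, LinearMap.coe_mk, AddHom.coe_mk,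
        LinearMap.id_coe, id_eq]
      push_cast [Submodule.coe_sum]
      rw [← dualEnd_apply, hefix _ q.2]
    · -- complement: Q is the range of the idempotent e
      refine ⟨LinearMap.ker (e.codRestrict Q heQ), ?_⟩
      exact LinearMap.isCompl_of_proj fun q => Subtype.ext (hefix _ q.2)
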